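/- arXiv:1309.4818 — 3 statements merged into one kernel-verified Lean document; each statement's English description precedes it below -/
import Mathlib

section
/- Let α, e be epsilon numbers and s an ordinal with s < α⁺ and Ep(s) ∩ α ⊆ e. Then s[α := e][e := α] = s, i.e., the substitution of α by e is inverted by the substitution of e by α. -/
open Ordinal

def IsEps (x : Ordinal.{0}) : Prop := omega0 ^ x = x

noncomputable def nextEps (x : Ordinal.{0}) : Ordinal.{0} := sInf {e | IsEps e ∧ x < e}

inductive InEp : Ordinal.{0} → Ordinal.{0} → Prop
  | self (x : Ordinal.{0}) (h : omega0 ^ x = x) : InEp x x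
  | exp (x e c y : Ordinal.{0}) (h : omega0 ^ x ≠ x) (hm : (e, c) ∈ CNF omega0 x)
      (hy : InEp y e) : InEp y x

/-- The set of epsilon numbers appearing in the iterated Cantor normal form of `x`. -/
def Ep (x : Ordinal.{0}) : Set Ordinal.{0} := {y | InEp y x}

/-- Substitution of the epsilon number `α` by the epsilon number `e` in the
iterated Cantor normal form of `x`. -/
noncomputable def subst (α e : Ordinal.{0}) (x : Ordinal.{0}) : Ordinal.{0} :=
  if h : omega0 ^ x = x then (if x = α then e else x)
  else ((CNF omega0 x).attach.map (fun p => omega0 ^ (subst α e p.1.1) * p.1.2)).sum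
termination_by x
decreasing_by
  have hx0 : x ≠ 0 := by
    rintro rfl
    have := p.2
    simp [Ordinal.CNF.zero_right] at this
  have hle := Ordinal.CNF.fst_le_log p.2
  have hlt : Ordinal.log omega0 x < x := by
    have h1 : x < omega0 ^ x :=
      lt_of_le_of_ne (Ordinal.right_le_opow x one_lt_omega0) (Ne.symm h)
    exact (Ordinal.lt_opow_iff_log_lt one_lt_omega0 hx0).mp h1
  exact lt_of_le_of_lt hle hlt

/-! ### Auxiliary lemmas -/

lemma not_isEps_zero : ¬ IsEps 0 := by
  simp [IsEps]

lemma IsEps.pos {x : Ordinal.{0}} (h : IsEps x) : 0 < x := by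
  rcases eq_zero_or_pos x with rfl | hx
  · exact absurd h not_isEps_zero
  · exact hx

lemma IsEps.log_eq {x : Ordinal.{0}} (h : IsEps x) : log omega0 x = x := by
  conv_lhs => rw [← h]
  exact log_opow one_lt_omega0 x

lemma log_lt_self_of_not_eps {x : Ordinal.{0}} (h : ¬ IsEps x) (hx0 : x ≠ 0) :
    log omega0 x < x := by
  have h1 : x < omega0 ^ x :=
    lt_of_le_of_ne (Ordinal.right_le_opow x one_lt_omega0) (fun he => h he.symm)
  exact (Ordinal.lt_opow_iff_log_lt one_lt_omega0 hx0).mp h1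

lemma subst_eps (p q x : Ordinal.{0}) (h : IsEps x) :
    subst p q x = if x = p then q else x := by
  rw [subst, dif_pos (show omega0 ^ x = x from h)]

lemma subst_eq_mapsum (p q x : Ordinal.{0}) (h : ¬ IsEps x) :
    subst p q x = ((CNF omega0 x).map (fun pr => omega0 ^ (subst p q pr.1) * pr.2)).sum := by
  rw [subst, dif_neg (show ¬ omega0 ^ x = x from h)]
  congr 1
  conv_rhs => rw [← List.attach_map_subtype_val (CNF omega0 x), List.map_map]
  rfl

lemma subst_zero (p q : Ordinal.{0}) : subst p q 0 = 0 := by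
  rw [subst_eq_mapsum p q 0 not_isEps_zero]
  simp

lemma CNF_eps {y : Ordinal.{0}} (h : IsEps y) : CNF omega0 y = [(y, 1)] := by
  have hy0 : y ≠ 0 := h.pos.ne'
  rw [CNF.ne_zero hy0, h.log_eq, h]
  rw [div_self hy0, mod_self, CNF.zero_right]

lemma subst_not_eps {p q : Ordinal.{0}} (hq : IsEps q) {x : Ordinal.{0}}
    (h : ¬ IsEps x) (hx0 : x ≠ 0) :
    subst p q x = omega0 ^ (subst p q (log omega0 x)) * (x / omega0 ^ log omega0 x)
      + subst p q (x % omega0 ^ log omega0 x) := by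
  rw [subst_eq_mapsum p q x h, CNF.ne_zero hx0, List.map_cons, List.sum_cons]
  congr 1
  set r := x % omega0 ^ log omega0 x with hr
  by_cases hr0 : r = 0
  · rw [hr0, CNF.zero_right, subst_zero]
    simp
  · by_cases hre : IsEps r
    · have heps : IsEps (subst p q r) := by
        rw [subst_eps p q r hre]
        split
        · exact hq
        · exact hre
      rw [CNF_eps hre]
      simp only [List.map_cons, List.map_nil, List.sum_cons, List.sum_nil, mul_one, add_zero]
      exact heps
    · rw [subst_eq_mapsum p q r hre]

lemma subst_pos {p q : Ordinal.{0}} (hq : 0 < q) {x : Ordinal.{0}} (hx : x ≠ 0) :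
    0 < subst p q x := by
  by_cases h : IsEps x
  · rw [subst_eps p q x h]
    split
    · exact hq
    · exact h.pos
  · rw [subst_eq_mapsum p q x h, CNF.ne_zero hx, List.map_cons, List.sum_cons]
    refine lt_of_lt_of_le ?_ (le_self_add)
    exact mul_pos (opow_pos _ omega0_pos) (div_opow_log_pos omega0 hx)

lemma inEp_le {z x : Ordinal.{0}} (h : InEp z x) : z ≤ x := by
  induction h with
  | self x h => exact le_rfl
  | exp x e c y h hm hy ih => exact ih.trans ((CNF.fst_le_log hm).trans (log_le_self _ _))

/-- The domain condition: `x < α⁺` and every epsilon subterm of `x` below `α` is below `e`. -/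
def Dom (α e x : Ordinal.{0}) : Prop :=
  x < nextEps α ∧ ∀ z, InEp z x → z < α → z < e

lemma inEp_of_cnf_subset {y x : Ordinal.{0}} (hx : ¬ IsEps x)
    (hsub : ∀ pr, pr ∈ CNF omega0 y → pr ∈ CNF omega0 x) {z : Ordinal.{0}}
    (hz : InEp z y) : InEp z x := by
  cases hz with
  | self y hy =>
    refine InEp.exp x y 1 y hx (hsub _ ?_) (InEp.self y hy)
    rw [CNF_eps hy]
    exact List.mem_singleton.2 rfl
  | exp y a c z h hm hz' => exact InEp.exp x a c z hx (hsub _ hm) hz'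

lemma dom_of_mem_cnf {α e x a c : Ordinal.{0}} (hd : Dom α e x) (hx : ¬ IsEps x)
    (hm : (a, c) ∈ CNF omega0 x) : Dom α e a ∧ a < x := by
  have hx0 : x ≠ 0 := by
    rintro rfl
    simp [CNF.zero_right] at hm
  have hax : a < x := lt_of_le_of_lt (CNF.fst_le_log hm) (log_lt_self_of_not_eps hx hx0)
  refine ⟨⟨hax.trans hd.1, fun z hz hzα => hd.2 z (InEp.exp x a c z hx hm hz) hzα⟩, hax⟩

lemma dom_log {α e x : Ordinal.{0}} (hd : Dom α e x) (hx : ¬ IsEps x) (hx0 : x ≠ 0) :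
    Dom α e (log omega0 x) ∧ log omega0 x < x := by
  refine dom_of_mem_cnf hd hx (a := log omega0 x) (c := x / omega0 ^ log omega0 x) ?_
  rw [CNF.ne_zero hx0]
  exact List.mem_cons_self

lemma dom_mod {α e x : Ordinal.{0}} (hd : Dom α e x) (hx : ¬ IsEps x) (hx0 : x ≠ 0) :
    Dom α e (x % omega0 ^ log omega0 x) ∧ x % omega0 ^ log omega0 x < x := by
  have hlt : x % omega0 ^ log omega0 x < x := mod_opow_log_lt_self omega0 hx0
  refine ⟨⟨hlt.trans hd.1, fun z hz hzα => hd.2 z ?_ hzα⟩, hlt⟩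
  refine inEp_of_cnf_subset hx (fun pr hpr => ?_) hz
  rw [CNF.ne_zero hx0]
  exact List.mem_cons_of_mem _ hpr

/-- If every epsilon leaf's image is below the epsilon number `E`, so is the substitution. -/
lemma subst_lt_of_leaves_lt {α e E : Ordinal.{0}} (hE : IsEps E) (he : IsEps e) :
    ∀ y, (∀ z, InEp z y → (if z = α then e else z) < E) → subst α e y < E := by
  intro y
  induction y using Ordinal.induction with
  | h y IH =>
  intro hleaf
  by_cases hey : IsEps y
  · rw [subst_eps α e y hey]
    exact hleaf y (InEp.self y hey)
  · by_cases hy0 : y = 0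
    · rw [hy0, subst_zero]
      exact hE.pos
    · rw [subst_not_eps he hey hy0]
      set a := log omega0 y with ha
      have hay : a < y := log_lt_self_of_not_eps hey hy0
      have hsa : subst α e a < E := by
        refine IH a hay (fun z hz => hleaf z ?_)
        refine InEp.exp y a (y / omega0 ^ a) z hey ?_ hz
        rw [CNF.ne_zero hy0]
        exact List.mem_cons_self
      have hsr : subst α e (y % omega0 ^ a) < E := by
        refine IH _ (mod_opow_log_lt_self omega0 hy0) (fun z hz => hleaf z ?_)
        refine inEp_of_cnf_subset hey (fun pr hpr => ?_) hz
        rw [CNF.ne_zero hy0]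
        exact List.mem_cons_of_mem _ hpr
      have h1 : omega0 ^ (subst α e a) * (y / omega0 ^ a) < E := by
        calc omega0 ^ (subst α e a) * (y / omega0 ^ a)
            < omega0 ^ (subst α e a) * omega0 :=
              (mul_lt_mul_iff_right₀ (opow_pos _ omega0_pos)).2 (div_opow_log_lt y one_lt_omega0)
          _ = omega0 ^ (Order.succ (subst α e a)) := (opow_succ _ _).symm
          _ ≤ omega0 ^ E := opow_le_opow_right omega0_pos (Order.succ_le_iff.2 hsa)
          _ = E := hE
      have := principal_add_omega0_opow E (a := omega0 ^ (subst α e a) * (y / omega0 ^ a))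
        (b := subst α e (y % omega0 ^ a))
      rw [hE] at this
      exact this h1 hsr

/-- If `r < ω ^ a` then `subst α e r < ω ^ subst α e a`, given monotonicity below `a`. -/
lemma subst_lt_opow {α e a : Ordinal.{0}} (he : IsEps e)
    (hmono : ∀ z, Dom α e z → z < a → subst α e z < subst α e a) :
    ∀ r, Dom α e r → r < omega0 ^ a → subst α e r < omega0 ^ (subst α e a) := by
  intro r
  induction r using Ordinal.induction with
  | h r IH =>
  intro hdr hra
  by_cases her : IsEps r
  · have hr : r < a := by
      rw [← her] at hra
      exact (opow_lt_opow_iff_right one_lt_omega0).1 hra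
    exact (hmono r hdr hr).trans_le (right_le_opow _ one_lt_omega0)
  · by_cases hr0 : r = 0
    · rw [hr0, subst_zero]
      exact opow_pos _ omega0_pos
    · rw [subst_not_eps he her hr0]
      set c := log omega0 r with hc
      have hcr : c < r := log_lt_self_of_not_eps her hr0
      have hca : c < a := by
        have h1 : omega0 ^ c ≤ r := opow_log_le_self omega0 hr0
        exact (opow_lt_opow_iff_right one_lt_omega0).1 (h1.trans_lt hra)
      have hsc : subst α e c < subst α e a :=
        hmono c (dom_log hdr her hr0).1 hca
      have h1 : omega0 ^ (subst α e c) * (r / omega0 ^ c) < omega0 ^ (subst α e a) := by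
        calc omega0 ^ (subst α e c) * (r / omega0 ^ c)
            < omega0 ^ (subst α e c) * omega0 :=
              (mul_lt_mul_iff_right₀ (opow_pos _ omega0_pos)).2 (div_opow_log_lt r one_lt_omega0)
          _ = omega0 ^ (Order.succ (subst α e c)) := (opow_succ _ _).symm
          _ ≤ omega0 ^ (subst α e a) :=
              opow_le_opow_right omega0_pos (Order.succ_le_iff.2 hsc)
      have h2 : subst α e (r % omega0 ^ c) < omega0 ^ (subst α e a) :=
        IH _ (dom_mod hdr her hr0).2 (dom_mod hdr her hr0).1
          ((mod_opow_log_lt_self omega0 hr0).trans hra)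
      exact principal_add_omega0_opow _ h1 h2

lemma eps_le_of_lt_nextEps {α x : Ordinal.{0}} (hx : IsEps x) (h : x < nextEps α) : x ≤ α := by
  by_contra hax
  push_neg at hax
  exact absurd (csInf_le' (show x ∈ {e | IsEps e ∧ α < e} from ⟨hx, hax⟩)) (not_le.2 h)

/-- Strict monotonicity of substitution on the domain. -/
lemma subst_mono {α e : Ordinal.{0}} (he : IsEps e) :
    ∀ x, Dom α e x → ∀ y, Dom α e y → y < x → subst α e y < subst α e x := by
  intro x
  induction x using Ordinal.induction with
  | h x IH =>
  intro hdx y hdy hyx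
  by_cases hex : IsEps x
  · rw [subst_eps α e x hex]
    by_cases hxa : x = α
    · rw [if_pos hxa]
      refine subst_lt_of_leaves_lt he he y (fun z hz => ?_)
      have hzy : z ≤ y := inEp_le hz
      have hzα : z < α := hxa ▸ (hzy.trans_lt hyx)
      rw [if_neg hzα.ne]
      exact hdy.2 z hz hzα
    · rw [if_neg hxa]
      have hxα : x < α := lt_of_le_of_ne (eps_le_of_lt_nextEps hex hdx.1) hxa
      refine subst_lt_of_leaves_lt hex he y (fun z hz => ?_)
      have hzx : z < x := (inEp_le hz).trans_lt hyx
      rw [if_neg (hzx.trans hxα).ne]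
      exact hzx
  · have hx0 : x ≠ 0 := by
      rintro rfl
      exact absurd hyx (not_lt_zero)
    rw [subst_not_eps he hex hx0]
    set a := log omega0 x with ha
    set b := x / omega0 ^ a with hb
    set r := x % omega0 ^ a with hr
    have hax : a < x := log_lt_self_of_not_eps hex hx0
    have hda : Dom α e a := (dom_log hdx hex hx0).1
    have hdr : Dom α e r := (dom_mod hdx hex hx0).1
    have hrx : r < x := (dom_mod hdx hex hx0).2
    have hb0 : b ≠ 0 := (div_opow_log_pos omega0 hx0).ne'
    have hmonoa : ∀ z, Dom α e z → z < a → subst α e z < subst α e a := IH a hax hda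
    have hxeq : omega0 ^ a * b + r = x := div_add_mod x (omega0 ^ a)
    by_cases hey : IsEps y
    · have hya : y ≤ a := by
        refine (opow_le_iff_le_log one_lt_omega0 hx0).1 ?_
        rw [hey]
        exact hyx.le
      rcases lt_or_eq_of_le hya with hya' | hya'
      · calc subst α e y < subst α e a := hmonoa y hdy hya'
          _ ≤ omega0 ^ (subst α e a) := right_le_opow _ one_lt_omega0
          _ ≤ omega0 ^ (subst α e a) * b := by
              conv_lhs => rw [← mul_one (omega0 ^ (subst α e a))]
              exact mul_le_mul_right (Ordinal.one_le_iff_ne_zero.2 hb0) _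
          _ ≤ omega0 ^ (subst α e a) * b + subst α e r := le_self_add
      · -- y = a, a is epsilon
        have hsya : subst α e y = subst α e a := by rw [hya']
        rw [hsya]
        have h1 : subst α e a ≤ omega0 ^ (subst α e a) := right_le_opow _ one_lt_omega0
        rcases lt_or_eq_of_le (Ordinal.one_le_iff_ne_zero.2 hb0) with hb1 | hb1
        · refine lt_of_le_of_lt h1 (lt_of_lt_of_le ?_ (le_self_add))
          conv_lhs => rw [← mul_one (omega0 ^ (subst α e a))]
          exact (mul_lt_mul_iff_right₀ (opow_pos _ omega0_pos)).2 hb1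
        · have hr0 : r ≠ 0 := by
            rintro h0
            rw [← hb1, mul_one, h0, add_zero] at hxeq
            rw [hya'] at hey
            rw [hey] at hxeq
            exact hyx.ne (hya'.trans hxeq)
          refine lt_of_le_of_lt h1 ?_
          rw [← hb1, mul_one]
          exact lt_add_of_pos_right _ (subst_pos he.pos hr0)
    · by_cases hy0 : y = 0
      · rw [hy0, subst_zero]
        refine lt_of_lt_of_le ?_ (le_self_add)
        exact mul_pos (opow_pos _ omega0_pos) (pos_iff_ne_zero.2 hb0)
      · set c := log omega0 y with hc
        have hca : c ≤ a := log_mono_right omega0 hyx.le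
        rcases lt_or_eq_of_le hca with hca' | hca'
        · have hyo : y < omega0 ^ a := by
            refine lt_of_lt_of_le (lt_opow_succ_log_self one_lt_omega0 y) ?_
            exact opow_le_opow_right omega0_pos (Order.succ_le_iff.2 hca')
          calc subst α e y < omega0 ^ (subst α e a) :=
                subst_lt_opow he hmonoa y hdy hyo
            _ ≤ omega0 ^ (subst α e a) * b := by
                conv_lhs => rw [← mul_one (omega0 ^ (subst α e a))]
                exact mul_le_mul_right (Ordinal.one_le_iff_ne_zero.2 hb0) _
            _ ≤ omega0 ^ (subst α e a) * b + subst α e r := le_self_add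
        · set d := y / omega0 ^ c with hd
          set ry := y % omega0 ^ c with hry
          have hyeq : omega0 ^ c * d + ry = y := div_add_mod y (omega0 ^ c)
          have hdry : Dom α e ry := (dom_mod hdy hey hy0).1
          have hdb : d ≤ b := by
            have hxlt : x < omega0 ^ a * Order.succ b := by
              rw [mul_succ, ← hxeq]
              exact add_lt_add_right (Ordinal.mod_lt x (opow_ne_zero a omega0_ne_zero)) _
            rw [hd, hca']
            exact (Ordinal.div_le (opow_ne_zero a omega0_ne_zero)).2 (hyx.le.trans_lt hxlt)
          rw [subst_not_eps he hey hy0, ← hc, ← hd, ← hry, hca']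
          have hrylt : ry < omega0 ^ a := by
            rw [← hca']
            exact Ordinal.mod_lt y (opow_ne_zero c omega0_ne_zero)
          have hsry : subst α e ry < omega0 ^ (subst α e a) :=
            subst_lt_opow he hmonoa ry hdry hrylt
          rcases lt_or_eq_of_le hdb with hdb' | hdb'
          · calc omega0 ^ (subst α e a) * d + subst α e ry
                < omega0 ^ (subst α e a) * d + omega0 ^ (subst α e a) :=
                  add_lt_add_right hsry _
              _ = omega0 ^ (subst α e a) * (Order.succ d) := (mul_succ _ _).symm
              _ ≤ omega0 ^ (subst α e a) * b := mul_le_mul_right (Order.succ_le_iff.2 hdb') _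
              _ ≤ omega0 ^ (subst α e a) * b + subst α e r := le_self_add
          · have hryr : ry < r := by
              have : omega0 ^ a * b + ry < omega0 ^ a * b + r := by
                rw [hxeq]
                calc omega0 ^ a * b + ry = omega0 ^ c * d + ry := by rw [hca', hdb']
                  _ = y := hyeq
                  _ < x := hyx
              exact (add_lt_add_iff_left _).1 this
            rw [hdb']
            exact add_lt_add_right (IH r hrx hdr ry hdry hryr) _

lemma subst_subst_key {α e : Ordinal.{0}} (hα : IsEps α) (he : IsEps e) :
    ∀ s, Dom α e s → subst e α (subst α e s) = s := by
  intro s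
  induction s using Ordinal.induction with
  | h s IH =>
  intro hd
  by_cases hes : IsEps s
  · rw [subst_eps α e s hes]
    by_cases hsa : s = α
    · rw [if_pos hsa, subst_eps e α e he, if_pos rfl, hsa]
    · have hsα : s < α := lt_of_le_of_ne (eps_le_of_lt_nextEps hes hd.1) hsa
      have hse' : s < e := hd.2 s (InEp.self s hes) hsα
      rw [if_neg hsa, subst_eps e α s hes, if_neg hse'.ne]
  · by_cases hs0 : s = 0
    · rw [hs0, subst_zero, subst_zero]
    · set a := log omega0 s with ha
      set b := s / omega0 ^ a with hb
      set r := s % omega0 ^ a with hr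
      have hda : Dom α e a := (dom_log hd hes hs0).1
      have haslt : a < s := (dom_log hd hes hs0).2
      have hdr : Dom α e r := (dom_mod hd hes hs0).1
      have hrslt : r < s := (dom_mod hd hes hs0).2
      have hb0 : b ≠ 0 := (div_opow_log_pos omega0 hs0).ne'
      have hbω : b < omega0 := div_opow_log_lt s one_lt_omega0
      have hmonoa : ∀ z, Dom α e z → z < a → subst α e z < subst α e a :=
        fun z hz hza => subst_mono he a hda z hz hza
      have hfr : subst α e r < omega0 ^ (subst α e a) :=
        subst_lt_opow he hmonoa r hdr (Ordinal.mod_lt s (opow_ne_zero a omega0_ne_zero))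
      rw [subst_not_eps he hes hs0, ← ha, ← hb, ← hr]
      set t := omega0 ^ (subst α e a) * b + subst α e r with hteq
      have hlogt : log omega0 t = subst α e a := by
        rw [hteq, log_opow_mul_add one_lt_omega0 hb0 hfr, log_eq_zero hbω, add_zero]
      have hdivt : t / omega0 ^ (subst α e a) = b := by
        rw [hteq, mul_add_div _ (opow_ne_zero _ omega0_ne_zero),
          div_eq_zero_of_lt hfr, add_zero]
      have hmodt : t % omega0 ^ (subst α e a) = subst α e r := by
        have h1 := div_add_mod t (omega0 ^ (subst α e a))
        rw [hdivt] at h1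
        rw [hteq] at h1
        exact add_left_cancel_iff.1 h1
      have hfa_lt : subst α e a < t := by
        have := subst_mono he s hd a hda haslt
        rwa [subst_not_eps he hes hs0, ← ha, ← hb, ← hr, ← hteq] at this
      have hnet : ¬ IsEps t := by
        intro hept
        have : log omega0 t = t := hept.log_eq
        rw [hlogt] at this
        exact hfa_lt.ne this
      have ht0 : t ≠ 0 := by
        rintro h0
        rw [h0] at hfa_lt
        exact absurd hfa_lt (not_lt_zero)
      rw [subst_not_eps hα hnet ht0, hlogt, hdivt, hmodt,
        IH a haslt hda, IH r hrslt hdr]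
      exact div_add_mod s (omega0 ^ a)

/-- The substitution of α by e is inverted by the substitution of e by α. -/
theorem subst_subst (α e s : Ordinal.{0}) (hα : IsEps α) (he : IsEps e)
    (hs : s < nextEps α) (hse : Ep s ∩ Set.Iio α ⊆ Set.Iio e) :
    subst e α (subst α e s) = s :=
  subst_subst_key hα he s ⟨hs, fun z hz hzα => hse ⟨hz, hzα⟩⟩
end

section
/- Let α, e be epsilon numbers and define M(α, e) := {q < α⁺ : Ep(q) ∩ α ⊆ e}. Then M(α, e) is closed under ordinal addition, ordinal multiplication, and the map x ↦ ω^x. -/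
open Ordinal

def MSet (α e : Ordinal.{0}) : Set Ordinal.{0} :=
  {q | q < nextEps α ∧ Ep q ∩ Set.Iio α ⊆ Set.Iio e}

lemma not_inEp_zero {y : Ordinal.{0}} : ¬ InEp y 0 := by
  intro h
  cases h with
  | self _ h => simp at h
  | exp _ E c _ hne hm hy => rw [CNF.zero_right] at hm; exact List.not_mem_nil hm

lemma eps_ne_zero {x : Ordinal.{0}} (h : omega0 ^ x = x) : x ≠ 0 := by
  rintro rfl; simp at h

lemma log_eq_self_of_eps {x : Ordinal.{0}} (h : omega0 ^ x = x) : log omega0 x = x := by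
  conv_lhs => rw [← h]
  exact log_opow one_lt_omega0 x

lemma CNF_of_eps {x : Ordinal.{0}} (h : omega0 ^ x = x) : CNF omega0 x = [(x, 1)] := by
  have hx := eps_ne_zero h
  rw [CNF.ne_zero hx, log_eq_self_of_eps h, h, div_self hx, mod_self, CNF.zero_right]

lemma inEp_of_mem_CNF {y E c x : Ordinal.{0}} (hm : (E, c) ∈ CNF omega0 x)
    (hy : InEp y E) : InEp y x := by
  by_cases h : omega0 ^ x = x
  · rw [CNF_of_eps h, List.mem_singleton, Prod.mk.injEq] at hm
    exact hm.1 ▸ hy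
  · exact InEp.exp x E c y h hm hy

lemma inEp_log {y x : Ordinal.{0}} (hx : x ≠ 0) (h : InEp y (log omega0 x)) : InEp y x := by
  refine inEp_of_mem_CNF (c := x / omega0 ^ log omega0 x) ?_ h
  rw [CNF.ne_zero hx]
  exact List.mem_cons_self

lemma inEp_mod {y x : Ordinal.{0}} (h : InEp y (x % omega0 ^ log omega0 x)) : InEp y x := by
  rcases eq_or_ne x 0 with rfl | hx
  · exact absurd (by simpa using h) not_inEp_zero
  cases h with
  | self _ hre =>
    have hr0 : x % omega0 ^ log omega0 x ≠ 0 := eps_ne_zero hre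
    have hmemr : (log omega0 (x % omega0 ^ log omega0 x),
        (x % omega0 ^ log omega0 x) / omega0 ^ log omega0 (x % omega0 ^ log omega0 x))
        ∈ CNF omega0 (x % omega0 ^ log omega0 x) := by
      rw [CNF.ne_zero hr0]
      exact List.mem_cons_self
    rw [log_eq_self_of_eps hre] at hmemr
    have hmemx : ((x % omega0 ^ log omega0 x),
        (x % omega0 ^ log omega0 x) / omega0 ^ (x % omega0 ^ log omega0 x))
        ∈ CNF omega0 x := by
      rw [CNF.ne_zero hx]
      exact List.mem_cons_of_mem _ hmemr
    exact inEp_of_mem_CNF hmemx (InEp.self _ hre)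
  | exp _ E c _ hne hm hy =>
    refine inEp_of_mem_CNF (E := E) (c := c) ?_ hy
    rw [CNF.ne_zero hx]
    exact List.mem_cons_of_mem _ hm

lemma CNF_eq_cons {x L d t : Ordinal.{0}} (h1 : omega0 ^ L ≤ x)
    (h2 : x < omega0 ^ (L + 1)) (heq : x = omega0 ^ L * d + t) (ht : t < omega0 ^ L) :
    CNF omega0 x = (L, d) :: CNF omega0 t := by
  have hw : (omega0 : Ordinal) ^ L ≠ 0 := (opow_pos L omega0_pos).ne'
  have hx : x ≠ 0 := ((opow_pos L omega0_pos).trans_le h1).ne'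
  have hlog : log omega0 x = L := by
    apply le_antisymm
    · have := (lt_opow_iff_log_lt one_lt_omega0 hx).1 h2
      rwa [add_one_eq_succ, Order.lt_succ_iff] at this
    · exact (opow_le_iff_le_log one_lt_omega0 hx).1 h1
  have hdiv : x / omega0 ^ L = d := by
    rw [heq, mul_add_div _ hw, div_eq_zero_of_lt ht, add_zero]
  have hmod : x % omega0 ^ L = t := by
    rw [heq, mul_add_mod_self, mod_eq_of_lt ht]
  rw [CNF.ne_zero hx, hlog, hdiv, hmod]

lemma inEp_add {y : Ordinal.{0}} : ∀ q s, InEp y (q + s) → InEp y q ∨ InEp y s := by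
  intro q
  induction q using Ordinal.induction with
  | _ q IH =>
  intro s h
  rcases eq_or_ne s 0 with rfl | hs0
  · rw [add_zero] at h; exact Or.inl h
  rcases eq_or_ne q 0 with rfl | hq0
  · rw [zero_add] at h; exact Or.inr h
  have hwq : (omega0 : Ordinal) ^ log omega0 q ≠ 0 := (opow_pos _ omega0_pos).ne'
  cases h with
  | self _ heps =>
    rcases (le_self_add (a := q) (b := s)).lt_or_eq with hq | hq
    · right
      have hs : s = q + s := by
        rcases (le_add_self (a := s) (b := q)).lt_or_eq with hs | hs
        · exfalso
          have h2 := principal_add_omega0_opow (q + s)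
            (heps.symm ▸ hq) (heps.symm ▸ hs)
          rw [heps] at h2
          exact lt_irrefl _ h2
        · exact hs
      rw [← hs]
      exact InEp.self s (by rw [hs]; exact hs ▸ heps)
    · left
      rw [← hq]
      exact InEp.self q (by rw [hq]; exact heps)
  | exp _ E c _ hne hm hy =>
    have hLq := opow_log_le_self omega0 hq0
    have hLq2 := lt_opow_succ_log_self one_lt_omega0 q
    have hLs := opow_log_le_self omega0 hs0
    have hLs2 := lt_opow_succ_log_self one_lt_omega0 s
    have hws : (omega0 : Ordinal) ^ log omega0 s ≠ 0 := (opow_pos _ omega0_pos).ne'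
    rcases lt_trichotomy (log omega0 q) (log omega0 s) with hlt | heq' | hgt
    · -- q absorbed
      have habs : q + s = s := by
        apply add_absorp (b := log omega0 s) _ hLs
        exact hLq2.trans_le (opow_le_opow_right omega0_pos (Order.succ_le_of_lt hlt))
      rw [habs] at hm
      exact Or.inr (inEp_of_mem_CNF hm hy)
    · -- merge case : equal logs
      rw [← heq'] at hLs hLs2 hws
      have key : CNF omega0 (q + s) =
          (log omega0 q, q / omega0 ^ log omega0 q + s / omega0 ^ log omega0 q)
            :: CNF omega0 (s % omega0 ^ log omega0 q) := by
        apply CNF_eq_cons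
        · exact hLq.trans (le_self_add)
        · rw [add_one_eq_succ]
          exact principal_add_omega0_opow _ hLq2 hLs2
        · have hpos : 0 < s / omega0 ^ log omega0 q := (Ordinal.div_pos hws).2 hLs
          have e1 : omega0 ^ log omega0 q *
                (q / omega0 ^ log omega0 q + s / omega0 ^ log omega0 q)
                + s % omega0 ^ log omega0 q
              = omega0 ^ log omega0 q * (q / omega0 ^ log omega0 q)
                + (omega0 ^ log omega0 q * (s / omega0 ^ log omega0 q)
                  + s % omega0 ^ log omega0 q) := by
            rw [mul_add, add_assoc]
          rw [e1]
          conv_lhs =>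
            rw [← div_add_mod q (omega0 ^ log omega0 q),
              ← div_add_mod s (omega0 ^ log omega0 q)]
          rw [add_assoc]
          congr 1
          exact add_absorp (mod_lt q hwq)
            (le_trans (le_mul_left _ hpos) le_self_add)
        · exact mod_lt s hws
      rw [key] at hm
      rcases List.mem_cons.1 hm with hm1 | hm1
      · rw [Prod.mk.injEq] at hm1
        exact Or.inl (inEp_log hq0 (hm1.1 ▸ hy))
      · right
        have h' := inEp_of_mem_CNF hm1 hy
        rw [heq'] at h'
        exact inEp_mod h'
    · -- log s < log q
      have hslt : s < omega0 ^ log omega0 q :=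
        hLs2.trans_le (opow_le_opow_right omega0_pos (Order.succ_le_of_lt hgt))
      have key : CNF omega0 (q + s) =
          (log omega0 q, q / omega0 ^ log omega0 q)
            :: CNF omega0 (q % omega0 ^ log omega0 q + s) := by
        apply CNF_eq_cons
        · exact hLq.trans (le_self_add)
        · rw [add_one_eq_succ]
          exact principal_add_omega0_opow _ hLq2
            (hslt.trans_le (opow_le_opow_right omega0_pos (Order.le_succ _)))
        · conv_lhs => rw [← div_add_mod q (omega0 ^ log omega0 q)]
          rw [add_assoc]
        · exact principal_add_omega0_opow _ (mod_lt q hwq) hslt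
      rw [key] at hm
      rcases List.mem_cons.1 hm with hm1 | hm1
      · rw [Prod.mk.injEq] at hm1
        exact Or.inl (inEp_log hq0 (hm1.1 ▸ hy))
      · have h' := inEp_of_mem_CNF hm1 hy
        have hrq : q % omega0 ^ log omega0 q < q := (mod_lt q hwq).trans_le hLq
        rcases IH _ hrq s h' with h'' | h''
        · exact Or.inl (inEp_mod h'')
        · exact Or.inr h''

lemma inEp_opow {y q : Ordinal.{0}} (h : InEp y (omega0 ^ q)) : InEp y q := by
  by_cases heps : omega0 ^ q = q
  · rwa [heps] at h
  rcases eq_or_ne q 0 with rfl | hq0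
  · rw [opow_zero] at h
    exfalso
    cases h with
    | self _ h1 => rw [opow_one] at h1; exact (one_lt_omega0.ne' h1)
    | exp _ E c _ hne hm hy =>
      rw [CNF.of_lt one_ne_zero one_lt_omega0, List.mem_singleton, Prod.mk.injEq] at hm
      exact not_inEp_zero (hm.1 ▸ hy)
  have key : CNF omega0 (omega0 ^ q) = [(q, 1)] := by
    have h0 : CNF omega0 (omega0 ^ q) = (q, 1) :: CNF omega0 0 := by
      apply CNF_eq_cons le_rfl
        ((opow_lt_opow_iff_right one_lt_omega0).2 (lt_add_one q))
        (by rw [mul_one, add_zero]) (opow_pos q omega0_pos)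
    rwa [CNF.zero_right] at h0
  cases h with
  | self _ h2 =>
    exfalso
    apply heps
    calc omega0 ^ q = log omega0 (omega0 ^ omega0 ^ q) :=
          (log_opow one_lt_omega0 _).symm
      _ = log omega0 (omega0 ^ q) := by rw [h2]
      _ = q := log_opow one_lt_omega0 _
  | exp _ E c _ hne hm hy =>
    rw [key, List.mem_singleton, Prod.mk.injEq] at hm
    exact hm.1 ▸ hy

lemma mul_opow_log {q b : Ordinal.{0}} (hq : q ≠ 0) (hb : b ≠ 0) :
    q * omega0 ^ b = omega0 ^ (log omega0 q + b) := by
  have hdq : q / omega0 ^ log omega0 q < omega0 := div_opow_log_lt q one_lt_omega0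
  have hb1 : (1 : Ordinal) ≤ b := Ordinal.one_le_iff_ne_zero.2 hb
  apply le_antisymm
  · have hqle : q ≤ omega0 ^ log omega0 q * (q / omega0 ^ log omega0 q + 1) := by
      rw [mul_add, mul_one]
      calc q = omega0 ^ log omega0 q * (q / omega0 ^ log omega0 q)
            + q % omega0 ^ log omega0 q := (div_add_mod q _).symm
        _ ≤ _ := add_le_add_right (mod_lt q (opow_pos _ omega0_pos).ne').le _
    calc q * omega0 ^ b
        ≤ omega0 ^ log omega0 q * (q / omega0 ^ log omega0 q + 1) * omega0 ^ b :=
          mul_le_mul_left hqle _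
      _ = omega0 ^ log omega0 q * ((q / omega0 ^ log omega0 q + 1) * omega0 ^ b) := by
          rw [mul_assoc]
      _ = omega0 ^ log omega0 q * omega0 ^ b := by
          congr 1
          have hbsplit : (omega0 : Ordinal) ^ b = omega0 * omega0 ^ (b - 1) := by
            conv_lhs => rw [← Ordinal.add_sub_cancel_of_le hb1]
            rw [opow_add, opow_one]
          have hpos : (0 : Ordinal) < q / omega0 ^ log omega0 q + 1 :=
            lt_of_lt_of_le zero_lt_one le_add_self
          have hlt : q / omega0 ^ log omega0 q + 1 < omega0 := by
            rw [add_one_eq_succ]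
            exact isSuccLimit_omega0.succ_lt hdq
          rw [hbsplit, ← mul_assoc, mul_omega0 hpos hlt]
      _ = omega0 ^ (log omega0 q + b) := (opow_add _ _ _).symm
  · rw [opow_add]
    exact mul_le_mul_left (opow_log_le_self _ hq) _

/-- M(α, e) is closed under ordinal addition, multiplication, and x ↦ ω^x. -/
theorem MSet_closed (α e : Ordinal.{0}) (hα : IsEps α) (he : IsEps e) :
    ∀ q ∈ MSet α e, ∀ s ∈ MSet α e,
      q + s ∈ MSet α e ∧ q * s ∈ MSet α e ∧ omega0 ^ q ∈ MSet α e := by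
  have hNE : Set.Nonempty {x | IsEps x ∧ α < x} := by
    refine ⟨nfp (fun x => omega0 ^ x) (α + 1), ?_, ?_⟩
    · exact nfp_fp (isNormal_opow one_lt_omega0) _
    · exact lt_of_lt_of_le (lt_add_one α) (le_nfp _ _)
  have hmem : IsEps (nextEps α) ∧ α < nextEps α := csInf_mem hNE
  obtain ⟨hAeps, hAgt⟩ := hmem
  have hadd : ∀ {a b : Ordinal}, a < nextEps α → b < nextEps α → a + b < nextEps α := by
    intro a b ha hb
    have := principal_add_omega0_opow (nextEps α)
      (hAeps.symm ▸ ha) (hAeps.symm ▸ hb)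
    rwa [hAeps] at this
  have hmul : ∀ {a b : Ordinal}, a < nextEps α → b < nextEps α → a * b < nextEps α := by
    intro a b ha hb
    have h2 : omega0 ^ omega0 ^ nextEps α = nextEps α := by rw [hAeps, hAeps]
    have := principal_mul_omega0_opow_opow (nextEps α)
      (h2.symm ▸ ha) (h2.symm ▸ hb)
    rwa [h2] at this
  have hopow : ∀ {a : Ordinal}, a < nextEps α → omega0 ^ a < nextEps α := by
    intro a ha
    have := (opow_lt_opow_iff_right one_lt_omega0).2 ha
    rwa [hAeps] at this
  have m0 : 0 ∈ MSet α e := by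
    refine ⟨lt_of_le_of_lt (zero_le (a := α)) hAgt, ?_⟩
    rintro y ⟨hy, -⟩
    exact absurd hy not_inEp_zero
  have madd : ∀ {a b : Ordinal}, a ∈ MSet α e → b ∈ MSet α e → a + b ∈ MSet α e := by
    rintro a b ⟨ha1, ha2⟩ ⟨hb1, hb2⟩
    refine ⟨hadd ha1 hb1, ?_⟩
    rintro y ⟨hy1, hy2⟩
    rcases inEp_add a b hy1 with h | h
    · exact ha2 ⟨h, hy2⟩
    · exact hb2 ⟨h, hy2⟩
  have mpow : ∀ {a : Ordinal}, a ∈ MSet α e → omega0 ^ a ∈ MSet α e := by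
    rintro a ⟨ha1, ha2⟩
    refine ⟨hopow ha1, ?_⟩
    rintro y ⟨hy1, hy2⟩
    exact ha2 ⟨inEp_opow hy1, hy2⟩
  have mlog : ∀ {a : Ordinal}, a ∈ MSet α e → log omega0 a ∈ MSet α e := by
    rintro a ⟨ha1, ha2⟩
    rcases eq_or_ne a 0 with rfl | ha0
    · rw [log_zero_right]; exact m0
    refine ⟨lt_of_le_of_lt (log_le_self _ _) ha1, ?_⟩
    rintro y ⟨hy1, hy2⟩
    exact ha2 ⟨inEp_log ha0 hy1, hy2⟩
  have mmod : ∀ {a : Ordinal}, a ∈ MSet α e →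
      a % omega0 ^ log omega0 a ∈ MSet α e := by
    rintro a ⟨ha1, ha2⟩
    refine ⟨lt_of_le_of_lt (mod_le _ _) ha1, ?_⟩
    rintro y ⟨hy1, hy2⟩
    exact ha2 ⟨inEp_mod hy1, hy2⟩
  intro q hq s hs
  have mmul : ∀ t : Ordinal, t ∈ MSet α e → q * t ∈ MSet α e := by
    intro t
    induction t using Ordinal.induction with
    | _ t IH =>
    intro ht
    rcases eq_or_ne t 0 with rfl | ht0
    · rw [mul_zero]; exact m0
    rcases eq_or_ne q 0 with hq0 | hq0
    · rw [hq0, zero_mul]; exact m0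
    have hwt : (omega0 : Ordinal) ^ log omega0 t ≠ 0 := (opow_pos _ omega0_pos).ne'
    have hqw : q * omega0 ^ log omega0 t ∈ MSet α e := by
      rcases eq_or_ne (log omega0 t) 0 with hL | hL
      · rw [hL, opow_zero, mul_one]; exact hq
      · rw [mul_opow_log hq0 hL]
        exact mpow (madd (mlog hq) (mlog ht))
    have hdt : t / omega0 ^ log omega0 t < omega0 := div_opow_log_lt t one_lt_omega0
    obtain ⟨n, hn⟩ := lt_omega0.1 hdt
    have hhead : q * (omega0 ^ log omega0 t * (t / omega0 ^ log omega0 t)) ∈ MSet α e := by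
      rw [← mul_assoc, hn]
      clear hn hdt
      induction n with
      | zero => rw [Nat.cast_zero, mul_zero]; exact m0
      | succ n IHn =>
        rw [Nat.cast_succ, mul_add, mul_one]
        exact madd IHn hqw
    have htail : q * (t % omega0 ^ log omega0 t) ∈ MSet α e := by
      have hlt : t % omega0 ^ log omega0 t < t :=
        (mod_lt t hwt).trans_le (opow_log_le_self _ ht0)
      exact IH _ hlt (mmod ht)
    have := madd hhead htail
    rwa [← mul_add, div_add_mod] at this
  exact ⟨madd hq hs, mmul s hs, mpow hq⟩
end

section
/- Let e ≤ α be epsilon numbers. Then the map q ↦ q[e := α] is an order-isomorphism from the interval [e, e⁺) onto [α, α⁺) ∩ M(e, α) that additionally commutes with ordinal addition, multiplication, and x ↦ ω^x, with inverse q ↦ q[α := e] (restricted appropriately). -/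
open Ordinal

namespace SubstAux

open Ordinal

lemma isEps_omega0_le {x : Ordinal} (h : IsEps x) : omega0 ≤ x := by
  have h1 : (1 : Ordinal) ≤ x := by
    rw [← h]; exact Ordinal.one_le_iff_ne_zero.2 (opow_ne_zero _ omega0_ne_zero)
  calc omega0 = omega0 ^ (1:Ordinal) := (opow_one _).symm
    _ ≤ omega0 ^ x := opow_le_opow_right omega0_pos h1
    _ = x := h

lemma isEps_pos {x : Ordinal} (h : IsEps x) : 0 < x :=
  lt_of_lt_of_le omega0_pos (isEps_omega0_le h)

lemma nextEps_spec (x : Ordinal) : IsEps (nextEps x) ∧ x < nextEps x := by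
  have hmem : IsEps (nfp (omega0 ^ ·) (x + 1)) ∧ x < nfp (omega0 ^ ·) (x + 1) := by
    constructor
    · exact Ordinal.nfp_fp (isNormal_opow one_lt_omega0) (x + 1)
    · rw [add_one_eq_succ]
      exact lt_of_lt_of_le (Order.lt_succ x) (le_nfp _ _)
  have hne : {e | IsEps e ∧ x < e}.Nonempty := ⟨_, hmem⟩
  exact csInf_mem hne

lemma lt_nextEps (x : Ordinal) : x < nextEps x := (nextEps_spec x).2

lemma isEps_nextEps (x : Ordinal) : IsEps (nextEps x) := (nextEps_spec x).1

lemma eps_le_of_lt_nextEps {q x : Ordinal} (hq : IsEps q) (h : q < nextEps x) : q ≤ x := by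
  by_contra hx
  exact absurd (csInf_le (OrderBot.bddBelow _)
    (show q ∈ {e | IsEps e ∧ x < e} from ⟨hq, lt_of_not_ge hx⟩)) (not_le.2 h)

lemma opow_lt_eps {E u : Ordinal} (hE : IsEps E) (hu : u < E) : omega0 ^ u < E := by
  calc omega0 ^ u < omega0 ^ E := (opow_lt_opow_iff_right one_lt_omega0).2 hu
    _ = E := hE

lemma add_lt_eps {E u v : Ordinal} (hE : IsEps E) (hu : u < E) (hv : v < E) : u + v < E := by
  have := principal_add_omega0_opow E
  rw [hE] at this
  exact this hu hv

lemma mul_lt_eps {E u v : Ordinal} (hE : IsEps E) (hu : u < E) (hv : v < E) : u * v < E := by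
  have h := principal_mul_omega0_opow_opow E
  rw [hE, hE] at h
  exact h hu hv

lemma inEp_le {y x : Ordinal} (h : InEp y x) : y ≤ x := by
  induction h with
  | self x h => exact le_rfl
  | exp x ee c y h hm hy ih =>
      exact ih.trans ((CNF.fst_le_log hm).trans (log_le_self _ _))

lemma isEps_of_inEp {y x : Ordinal} (h : InEp y x) : IsEps y := by
  induction h with
  | self x h => exact h
  | exp x ee c y h hm hy ih => exact ih

lemma inEp_eps_iff {y x : Ordinal} (hx : IsEps x) : InEp y x ↔ y = x := by
  constructor
  · intro h
    cases h with
    | self => rfl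
    | exp x ee c y h hm hy => exact absurd hx h
  · rintro rfl; exact InEp.self _ hx

lemma Ep_zero : Ep 0 = ∅ := by
  ext z
  simp only [Ep, Set.mem_setOf_eq, Set.mem_empty_iff_false, iff_false]
  intro h
  cases h with
  | self x h => simp at h
  | exp x ee c y h hm hy => rw [Ordinal.CNF.zero_right] at hm; simp at hm

end SubstAux

namespace SubstAux
open Ordinal

lemma subst_eps (β γ : Ordinal) {x : Ordinal} (hx : IsEps x) :
    subst β γ x = if x = β then γ else x := by
  have hx' : omega0 ^ x = x := hx
  rw [subst, dif_pos hx']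

lemma subst_noneps (β γ : Ordinal) {x : Ordinal} (hx : ¬ IsEps x) :
    subst β γ x = ((CNF omega0 x).map (fun p => omega0 ^ subst β γ p.1 * p.2)).sum := by
  have hx' : ¬ omega0 ^ x = x := hx
  rw [subst, dif_neg hx']
  congr 1
  rw [← List.attach_map_val (l := CNF omega0 x) (f := fun p => omega0 ^ subst β γ p.1 * p.2)]

lemma subst_zero (β γ : Ordinal) : subst β γ 0 = 0 := by
  rw [subst_noneps β γ (by simp [IsEps]), Ordinal.CNF.zero_right]
  rfl

lemma isEps_subst_of_isEps (β : Ordinal) {γ x : Ordinal} (hγ : IsEps γ) (hx : IsEps x) :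
    IsEps (subst β γ x) := by
  rw [subst_eps β γ hx]
  split <;> assumption

lemma CNF_eps {x : Ordinal} (hx : IsEps x) : CNF omega0 x = [(x, 1)] := by
  have hx0 : x ≠ 0 := (isEps_pos hx).ne'
  have hlog : log omega0 x = x := by
    conv_lhs => rw [← hx]
    exact log_opow one_lt_omega0 x
  have hx' : omega0 ^ x = x := hx
  rw [Ordinal.CNF.ne_zero hx0, hlog, hx', Ordinal.div_self hx0, mod_self, Ordinal.CNF.zero_right]

lemma subst_sum_eq (β : Ordinal) {γ : Ordinal} (hγ : IsEps γ) (t : Ordinal) :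
    ((CNF omega0 t).map (fun p => omega0 ^ subst β γ p.1 * p.2)).sum = subst β γ t := by
  by_cases ht : IsEps t
  · rw [CNF_eps ht]
    have h2 : omega0 ^ subst β γ t = subst β γ t := isEps_subst_of_isEps β hγ ht
    simp [h2]
  · rw [subst_noneps β γ ht]

namespace SubstAux
open Ordinal

section Decomp

variable {a c t : Ordinal}

lemma hd_log (hc0 : c ≠ 0) (hcw : c < omega0) (ht : t < omega0 ^ a) :
    log omega0 (omega0 ^ a * c + t) = a := by
  rw [log_opow_mul_add one_lt_omega0 hc0 ht, log_eq_zero hcw, add_zero]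

lemma hd_div (ht : t < omega0 ^ a) : (omega0 ^ a * c + t) / omega0 ^ a = c := by
  rw [mul_add_div _ (opow_ne_zero _ omega0_ne_zero), div_eq_zero_of_lt ht, add_zero]

lemma hd_mod (ht : t < omega0 ^ a) : (omega0 ^ a * c + t) % omega0 ^ a = t := by
  have h := div_add_mod (omega0 ^ a * c + t) (omega0 ^ a)
  rw [hd_div ht] at h
  exact add_left_cancel h

lemma hd_ne_zero (hc0 : c ≠ 0) : omega0 ^ a * c + t ≠ 0 := by
  intro h
  have h1 := left_eq_zero_of_add_eq_zero h
  rcases mul_eq_zero.1 h1 with h2 | h2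
  · exact opow_ne_zero _ omega0_ne_zero h2
  · exact hc0 h2

lemma CNF_opow_mul_add (hc0 : c ≠ 0) (hcw : c < omega0) (ht : t < omega0 ^ a) :
    CNF omega0 (omega0 ^ a * c + t) = (a, c) :: CNF omega0 t := by
  rw [Ordinal.CNF.ne_zero (hd_ne_zero hc0), hd_log hc0 hcw ht, hd_div ht, hd_mod ht]

end Decomp

lemma subst_HD (β : Ordinal) {γ : Ordinal} (hγ : IsEps γ) {x : Ordinal} (hx0 : x ≠ 0) :
    subst β γ x = omega0 ^ (subst β γ (log omega0 x)) * (x / omega0 ^ log omega0 x)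
      + subst β γ (x % omega0 ^ log omega0 x) := by
  by_cases hx : IsEps x
  · have hx' : omega0 ^ x = x := hx
    have hlog : log omega0 x = x := by conv_lhs => rw [← hx']
                                       exact log_opow one_lt_omega0 x
    rw [hlog, hx', Ordinal.div_self hx0, mod_self, subst_zero, mul_one, add_zero]
    have h2 : omega0 ^ subst β γ x = subst β γ x := isEps_subst_of_isEps β hγ hx
    exact h2.symm
  · rw [subst_noneps β γ hx, Ordinal.CNF.ne_zero hx0, List.map_cons, List.sum_cons,
      subst_sum_eq β hγ]

lemma subst_HD' (β : Ordinal) {γ : Ordinal} (hγ : IsEps γ) {a c t : Ordinal}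
    (hc0 : c ≠ 0) (hcw : c < omega0) (ht : t < omega0 ^ a) :
    subst β γ (omega0 ^ a * c + t) = omega0 ^ (subst β γ a) * c + subst β γ t := by
  rw [subst_HD β hγ (hd_ne_zero hc0), hd_log hc0 hcw ht, hd_div ht, hd_mod ht]

lemma subst_opow (β : Ordinal) {γ : Ordinal} (hγ : IsEps γ) (u : Ordinal) :
    subst β γ (omega0 ^ u) = omega0 ^ subst β γ u := by
  have h := subst_HD' β hγ (a := u) (c := 1) (t := 0) one_ne_zero one_lt_omega0
    (opow_pos u omega0_pos)
  simpa [subst_zero] using h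

lemma inEp_head {x a z : Ordinal} (hx : ¬ IsEps x) (hx0 : x ≠ 0)
    (hlog : log omega0 x = a) (hz : InEp z a) : InEp z x := by
  refine InEp.exp x a (x / omega0 ^ a) z hx ?_ hz
  rw [Ordinal.CNF.ne_zero hx0, hlog]
  exact List.mem_cons_self

lemma inEp_of_mem_CNF {z : Ordinal} {p : Ordinal × Ordinal} {t : Ordinal}
    (hm : p ∈ CNF omega0 t) (hz : InEp z p.1) : InEp z t := by
  by_cases ht : IsEps t
  · rw [CNF_eps ht] at hm
    have : p = (t, 1) := List.mem_singleton.1 hm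
    subst this
    exact hz
  · exact InEp.exp t p.1 p.2 z ht (by rcases p with ⟨u,v⟩; exact hm) hz

lemma Ep_decomp {u c v z : Ordinal} (hc0 : c ≠ 0) (hcw : c < omega0) (hv : v < omega0 ^ u)
    (hne : ¬ IsEps (omega0 ^ u * c + v)) (hz : InEp z (omega0 ^ u * c + v)) :
    InEp z u ∨ InEp z v := by
  cases hz with
  | self x h => exact absurd h hne
  | exp x ee cc y h hm hy =>
      rw [CNF_opow_mul_add hc0 hcw hv] at hm
      rcases List.mem_cons.1 hm with h1 | h1
      · injection h1 with h2 h3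
        subst h2
        exact Or.inl hy
      · exact Or.inr (inEp_of_mem_CNF (p := (ee, cc)) h1 hy)

end SubstAux

namespace SubstAux
open Ordinal

lemma log_eps {x : Ordinal} (hx : IsEps x) : log omega0 x = x := by
  have hx' : omega0 ^ x = x := hx
  conv_lhs => rw [← hx']
  exact log_opow one_lt_omega0 x

lemma log_lt_noneps {x : Ordinal} (hx : ¬ IsEps x) (hx0 : x ≠ 0) : log omega0 x < x := by
  have h1 : x < omega0 ^ x :=
    lt_of_le_of_ne (right_le_opow x one_lt_omega0) (fun h => hx h.symm)
  exact (lt_opow_iff_log_lt one_lt_omega0 hx0).1 h1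

lemma div_mono_left {x y z : Ordinal} (h : x ≤ y) : x / z ≤ y / z := by
  rcases eq_or_ne z 0 with rfl | hz
  · simp [Ordinal.div_zero]
  · rw [Ordinal.div_le hz]
    exact lt_of_le_of_lt h (Ordinal.lt_mul_succ_div y hz)

lemma succ_le_of_lt' {x y : Ordinal} (h : x < y) : x + 1 ≤ y := by
  rw [add_one_eq_succ]; exact Order.succ_le_of_lt h

lemma master (e α : Ordinal) (he : IsEps e) (hα : IsEps α) (hle : e ≤ α) :
    ∀ y : Ordinal,
      (y < e → subst e α y = y) ∧
      (y < nextEps e → y ≤ subst e α y) ∧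
      (e ≤ y → y < nextEps e → α ≤ subst e α y) ∧
      (y < nextEps e → ∀ x, x < y → subst e α x < subst e α y) ∧
      (y < nextEps e → ∀ r, r < omega0 ^ y → subst e α r < omega0 ^ subst e α y) ∧
      (y < nextEps e → subst e α y < nextEps α) ∧
      (y < nextEps e → Ep (subst e α y) ∩ Set.Iio α ⊆ Set.Iio e) := by
  intro y
  induction y using Ordinal.induction with
  | h y IH =>
  by_cases hy0 : y = 0
  · subst hy0
    refine ⟨fun _ => subst_zero e α, ?_, ?_, ?_, ?_, ?_, ?_⟩
    · intro _; rw [subst_zero]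
    · intro h _; exact absurd h (not_le.2 (isEps_pos he))
    · intro _ x hx; exact absurd hx (not_lt_of_ge zero_le)
    · intro _ r hr
      rw [opow_zero] at hr
      rw [Ordinal.lt_one_iff_zero.1 hr, subst_zero]
      exact opow_pos _ omega0_pos
    · intro _; rw [subst_zero]
      exact lt_of_le_of_lt zero_le (lt_nextEps α)
    · intro _; rw [subst_zero, Ep_zero]; simp
  by_cases heps : IsEps y
  · -- epsilon case
    have hse : subst e α y = if y = e then α else y := subst_eps e α heps
    have hA : y < e → subst e α y = y := by
      intro h; rw [hse, if_neg (ne_of_lt h)]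
    have hE : y < nextEps e → y ≤ subst e α y := by
      intro _; rw [hse]
      split
      · next h => rw [h]; exact hle
      · exact le_rfl
    have hB : e ≤ y → y < nextEps e → α ≤ subst e α y := by
      intro h1 h2
      have hye : y = e := le_antisymm (eps_le_of_lt_nextEps heps h2) h1
      rw [hse, if_pos hye]
    have hM : y < nextEps e → ∀ x, x < y → subst e α x < subst e α y := by
      intro h1 x hx
      have hxe : x < e := lt_of_lt_of_le hx (eps_le_of_lt_nextEps heps h1)
      have hgx : subst e α x = x := (IH x hx).1 hxe
      rw [hgx, hse]
      split
      · exact lt_of_lt_of_le hxe hle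
      · exact hx
    have hT : y < nextEps e → ∀ r, r < omega0 ^ y → subst e α r < omega0 ^ subst e α y := by
      intro h1 r hr
      have hy' : omega0 ^ y = y := heps
      rw [hy'] at hr
      have hgy : omega0 ^ subst e α y = subst e α y := isEps_subst_of_isEps e hα heps
      rw [hgy]
      exact hM h1 r hr
    have hC : y < nextEps e → subst e α y < nextEps α := by
      intro h1
      rw [hse]
      split
      · exact lt_nextEps α
      · exact lt_of_le_of_lt ((eps_le_of_lt_nextEps heps h1).trans hle) (lt_nextEps α)
    have hD : y < nextEps e → Ep (subst e α y) ∩ Set.Iio α ⊆ Set.Iio e := by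
      intro h1 z hz
      obtain ⟨hz1, hz2⟩ := hz
      rw [hse] at hz1
      by_cases hye : y = e
      · rw [if_pos hye] at hz1
        have : z = α := (inEp_eps_iff hα).1 hz1
        exact absurd (this ▸ hz2) (lt_irrefl α)
      · rw [if_neg hye] at hz1
        have hzy : z = y := (inEp_eps_iff heps).1 hz1
        have : y < e := lt_of_le_of_ne (eps_le_of_lt_nextEps heps h1) hye
        exact hzy ▸ this
    exact ⟨hA, hE, hB, hM, hT, hC, hD⟩
  · -- non-epsilon case
    set a := log omega0 y with ha
    set c := y / omega0 ^ a with hcdef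
    set t := y % omega0 ^ a with htdef
    have hyd : omega0 ^ a * c + t = y := div_add_mod y (omega0 ^ a)
    have hc0 : c ≠ 0 :=
      ((Ordinal.div_pos (opow_ne_zero _ omega0_ne_zero)).2 (opow_log_le_self _ hy0)).ne'
    have hcw : c < omega0 := div_opow_log_lt y one_lt_omega0
    have htw : t < omega0 ^ a := mod_lt y (opow_ne_zero _ omega0_ne_zero)
    have hay : a < y := log_lt_noneps heps hy0
    have hty : t < y := lt_of_lt_of_le htw (opow_log_le_self _ hy0)
    have hHD : subst e α y = omega0 ^ subst e α a * c + subst e α t := by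
      conv_lhs => rw [← hyd]
      exact subst_HD' e hα hc0 hcw htw
    obtain ⟨Aa, Ea, Ba, Ma, Ta, Ca, Da⟩ := IH a hay
    obtain ⟨At, Et, Bt, Mt, Tt, Ct, Dt⟩ := IH t hty
    have hA : y < e → subst e α y = y := by
      intro h
      rw [hHD, Aa (hay.trans h), At (hty.trans h), hyd]
    have hE : y < nextEps e → y ≤ subst e α y := by
      intro h1
      have h2 : a ≤ subst e α a := Ea (hay.trans h1)
      have h3 : t ≤ subst e α t := Et (hty.trans h1)
      calc y = omega0 ^ a * c + t := hyd.symm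
        _ ≤ omega0 ^ subst e α a * c + subst e α t :=
            add_le_add (mul_le_mul_left (opow_le_opow_right omega0_pos h2) c) h3
        _ = subst e α y := hHD.symm
    have hB : e ≤ y → y < nextEps e → α ≤ subst e α y := by
      intro hey h1
      have hloge : log omega0 e = e := log_eps he
      have hea : e ≤ a := by rw [← hloge]; exact log_mono_right _ hey
      have hga : α ≤ subst e α a := Ba hea (hay.trans h1)
      have hα' : omega0 ^ α = α := hα
      calc α = omega0 ^ α := hα'.symm
        _ ≤ omega0 ^ subst e α a := opow_le_opow_right omega0_pos hga
        _ ≤ omega0 ^ subst e α a * c := le_mul_left _ (pos_iff_ne_zero.2 hc0)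
        _ ≤ subst e α y := hHD ▸ le_self_add
    have hM : y < nextEps e → ∀ x, x < y → subst e α x < subst e α y := by
      intro h1 x hx
      by_cases hx0 : x = 0
      · rw [hx0, subst_zero, hHD]
        exact lt_of_lt_of_le (mul_pos (opow_pos _ omega0_pos)
          (pos_iff_ne_zero.2 hc0)) (le_self_add)
      · set b := log omega0 x with hb
        set d := x / omega0 ^ b with hddef
        set s := x % omega0 ^ b with hsdef
        have hxd : omega0 ^ b * d + s = x := div_add_mod x (omega0 ^ b)
        have hd0 : d ≠ 0 :=
          ((Ordinal.div_pos (opow_ne_zero _ omega0_ne_zero)).2 (opow_log_le_self _ hx0)).ne'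
        have hdw : d < omega0 := div_opow_log_lt x one_lt_omega0
        have hsw : s < omega0 ^ b := mod_lt x (opow_ne_zero _ omega0_ne_zero)
        have hxHD : subst e α x = omega0 ^ subst e α b * d + subst e α s := by
          conv_lhs => rw [← hxd]
          exact subst_HD' e hα hd0 hdw hsw
        have hba : b ≤ a := log_mono_right _ hx.le
        rcases lt_or_eq_of_le hba with hlt | heq
        · have hby : b < y := hlt.trans hay
          have h2 : subst e α b < subst e α a := Ma (hay.trans h1) b hlt
          obtain ⟨-, -, -, -, Tb, -, -⟩ := IH b hby
          have h3 : subst e α s < omega0 ^ subst e α b := Tb (hby.trans h1) s hsw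
          calc subst e α x = omega0 ^ subst e α b * d + subst e α s := hxHD
            _ < omega0 ^ subst e α b * d + omega0 ^ subst e α b := add_lt_add_right h3 _
            _ = omega0 ^ subst e α b * (d + 1) := by rw [mul_add_one]
            _ ≤ omega0 ^ subst e α b * omega0 := mul_le_mul_right (succ_le_of_lt' hdw) _
            _ = omega0 ^ (subst e α b + 1) := by rw [add_one_eq_succ, opow_succ]
            _ ≤ omega0 ^ subst e α a := opow_le_opow_right omega0_pos (succ_le_of_lt' h2)
            _ ≤ omega0 ^ subst e α a * c := le_mul_left _ (pos_iff_ne_zero.2 hc0)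
            _ ≤ subst e α y := hHD ▸ le_self_add
        · rw [heq] at hxHD hsw
          have hdc : d ≤ c := by
            show x / omega0 ^ b ≤ y / omega0 ^ a
            rw [heq]
            exact div_mono_left hx.le
          rcases lt_or_eq_of_le hdc with hdlt | hdeq
          · calc subst e α x = omega0 ^ subst e α a * d + subst e α s := hxHD
              _ < omega0 ^ subst e α a * d + omega0 ^ subst e α a :=
                  add_lt_add_right (Ta (hay.trans h1) s hsw) _
              _ = omega0 ^ subst e α a * (d + 1) := by rw [mul_add_one]
              _ ≤ omega0 ^ subst e α a * c := mul_le_mul_right (succ_le_of_lt' hdlt) _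
              _ ≤ subst e α y := hHD ▸ le_self_add
          · have hst : s < t := by
              have := hx
              rw [← hxd, ← hyd, heq, hdeq] at this
              exact lt_of_add_lt_add_left this
            have h3 : subst e α s < subst e α t := Mt (hty.trans h1) s hst
            rw [hdeq] at hxHD
            rw [hxHD, hHD]
            exact add_lt_add_right h3 _
    have hT : y < nextEps e → ∀ r, r < omega0 ^ y → subst e α r < omega0 ^ subst e α y := by
      intro h1 r hr
      by_cases hr0 : r = 0
      · rw [hr0, subst_zero]; exact opow_pos _ omega0_pos
      · set l := log omega0 r with hl
        have hly : l < y := (lt_opow_iff_log_lt one_lt_omega0 hr0).1 hr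
        have h2 : subst e α l < subst e α y := hM h1 l hly
        obtain ⟨-, -, -, -, Tl, -, -⟩ := IH l hly
        have hrd : omega0 ^ l * (r / omega0 ^ l) + r % omega0 ^ l = r := div_add_mod r _
        have hrc0 : r / omega0 ^ l ≠ 0 :=
          ((Ordinal.div_pos (opow_ne_zero _ omega0_ne_zero)).2 (opow_log_le_self _ hr0)).ne'
        have hrcw : r / omega0 ^ l < omega0 := div_opow_log_lt r one_lt_omega0
        have hrsw : r % omega0 ^ l < omega0 ^ l := mod_lt r (opow_ne_zero _ omega0_ne_zero)
        have hrHD : subst e α r =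
            omega0 ^ subst e α l * (r / omega0 ^ l) + subst e α (r % omega0 ^ l) := by
          conv_lhs => rw [← hrd]
          exact subst_HD' e hα hrc0 hrcw hrsw
        have h3 : subst e α (r % omega0 ^ l) < omega0 ^ subst e α l :=
          Tl (hly.trans h1) _ hrsw
        calc subst e α r = omega0 ^ subst e α l * (r / omega0 ^ l)
              + subst e α (r % omega0 ^ l) := hrHD
          _ < omega0 ^ subst e α l * (r / omega0 ^ l) + omega0 ^ subst e α l :=
              add_lt_add_right h3 _
          _ = omega0 ^ subst e α l * (r / omega0 ^ l + 1) := by rw [mul_add_one]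
          _ ≤ omega0 ^ subst e α l * omega0 := mul_le_mul_right (succ_le_of_lt' hrcw) _
          _ = omega0 ^ (subst e α l + 1) := by rw [add_one_eq_succ, opow_succ]
          _ ≤ omega0 ^ subst e α y := opow_le_opow_right omega0_pos (succ_le_of_lt' h2)
    have hC : y < nextEps e → subst e α y < nextEps α := by
      intro h1
      have hEps := isEps_nextEps α
      have h2 : subst e α a < nextEps α := Ca (hay.trans h1)
      have h3 : subst e α t < nextEps α := Ct (hty.trans h1)
      have h4 : c < nextEps α :=
        lt_of_lt_of_le hcw ((isEps_omega0_le hα).trans (lt_nextEps α).le)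
      rw [hHD]
      exact add_lt_eps hEps (mul_lt_eps hEps (opow_lt_eps hEps h2) h4) h3
    have hD : y < nextEps e → Ep (subst e α y) ∩ Set.Iio α ⊆ Set.Iio e := by
      intro h1
      by_cases hgy : IsEps (subst e α y)
      · rcases lt_or_ge y e with hye | hey
        · rw [hA hye] at hgy
          exact absurd hgy heps
        · intro z hz
          obtain ⟨hz1, hz2⟩ := hz
          have hzz : z = subst e α y := (inEp_eps_iff hgy).1 hz1
          exact absurd (hzz ▸ hz2) (not_lt.2 (hB hey h1))
      · intro z hz
        obtain ⟨hz1, hz2⟩ := hz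
        have h3 : subst e α t < omega0 ^ subst e α a := Ta (hay.trans h1) t htw
        rw [hHD] at hz1 hgy
        rcases Ep_decomp hc0 hcw h3 hgy hz1 with h4 | h4
        · exact Da (hay.trans h1) ⟨h4, hz2⟩
        · exact Dt (hty.trans h1) ⟨h4, hz2⟩
    exact ⟨hA, hE, hB, hM, hT, hC, hD⟩

end SubstAux

namespace SubstAux
open Ordinal

lemma subst_le (e α : Ordinal) (he : IsEps e) (hα : IsEps α) (hle : e ≤ α) {q r : Ordinal}
    (h : q ≤ r) (hr : r < nextEps e) : subst e α q ≤ subst e α r := by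
  rcases lt_or_eq_of_le h with h' | h'
  · exact ((master e α he hα hle r).2.2.2.1 hr q h').le
  · rw [h']

lemma subst_lt_of_lt_eps {e α d : Ordinal} (he : IsEps e) (hα : IsEps α) (hle : e ≤ α)
    (hd : d < e) : subst e α d = d := (master e α he hα hle d).1 hd

lemma subst_add (e α : Ordinal) (he : IsEps e) (hα : IsEps α) (hle : e ≤ α) :
    ∀ q, q < nextEps e → ∀ r, r < nextEps e →
      subst e α (q + r) = subst e α q + subst e α r := by
  intro q
  induction q using Ordinal.induction with
  | h q IHq =>
  intro hq r hr
  by_cases hq0 : q = 0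
  · rw [hq0, subst_zero, zero_add, zero_add]
  by_cases hr0 : r = 0
  · rw [hr0, subst_zero, add_zero, add_zero]
  set a := log omega0 q with ha
  set c := q / omega0 ^ a with hcdef
  set t := q % omega0 ^ a with htdef
  have hqd : omega0 ^ a * c + t = q := div_add_mod q (omega0 ^ a)
  have hc0 : c ≠ 0 :=
    ((Ordinal.div_pos (opow_ne_zero _ omega0_ne_zero)).2 (opow_log_le_self _ hq0)).ne'
  have hcw : c < omega0 := div_opow_log_lt q one_lt_omega0
  have htw : t < omega0 ^ a := mod_lt q (opow_ne_zero _ omega0_ne_zero)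
  have htq : t < q := lt_of_lt_of_le htw (opow_log_le_self _ hq0)
  have hqHD : subst e α q = omega0 ^ subst e α a * c + subst e α t := by
    conv_lhs => rw [← hqd]
    exact subst_HD' e hα hc0 hcw htw
  set b := log omega0 r with hb
  set d := r / omega0 ^ b with hddef
  set s := r % omega0 ^ b with hsdef
  have hrd : omega0 ^ b * d + s = r := div_add_mod r (omega0 ^ b)
  have hd0 : d ≠ 0 :=
    ((Ordinal.div_pos (opow_ne_zero _ omega0_ne_zero)).2 (opow_log_le_self _ hr0)).ne'
  have hdw : d < omega0 := div_opow_log_lt r one_lt_omega0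
  have hsw : s < omega0 ^ b := mod_lt r (opow_ne_zero _ omega0_ne_zero)
  have hrHD : subst e α r = omega0 ^ subst e α b * d + subst e α s := by
    conv_lhs => rw [← hrd]
    exact subst_HD' e hα hd0 hdw hsw
  have hae : a < nextEps e := lt_of_le_of_lt (log_le_self _ _) hq
  have hbe : b < nextEps e := lt_of_le_of_lt (log_le_self _ _) hr
  have hte : t < nextEps e := htq.trans hq
  obtain ⟨-, -, -, -, Ta, -, -⟩ := master e α he hα hle a
  obtain ⟨-, -, -, Mb, Tb, -, -⟩ := master e α he hα hle b
  rcases lt_trichotomy a b with hab | hab | hab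
  · -- q absorbed by r
    have h1 : q + r = r :=
      add_absorp ((lt_opow_iff_log_lt one_lt_omega0 hq0).2 hab) (opow_log_le_self _ hr0)
    have h2 : subst e α q + subst e α r = subst e α r := by
      apply add_absorp (Tb hbe q ((lt_opow_iff_log_lt one_lt_omega0 hq0).2 hab))
      rw [hrHD]
      exact le_trans (Ordinal.le_mul_left _ (pos_iff_ne_zero.2 hd0)) (le_self_add)
    rw [h1, h2]
  · -- equal logs
    rw [← hab] at hrHD hsw hrd
    have hcd0 : c + d ≠ 0 := fun h => hc0 (left_eq_zero_of_add_eq_zero h)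
    have hcdw : c + d < omega0 := principal_add_omega0 hcw hdw
    have habs1 : t + (omega0 ^ a * d + s) = omega0 ^ a * d + s :=
      add_absorp htw (le_trans (Ordinal.le_mul_left _ (pos_iff_ne_zero.2 hd0))
        (le_self_add))
    have h1 : q + r = omega0 ^ a * (c + d) + s := by
      rw [← hqd, ← hrd, add_assoc, habs1, ← add_assoc, ← mul_add]
    have habs2 : subst e α t + (omega0 ^ subst e α a * d + subst e α s) =
        omega0 ^ subst e α a * d + subst e α s :=
      add_absorp (Ta hae t htw)
        (le_trans (Ordinal.le_mul_left _ (pos_iff_ne_zero.2 hd0)) (le_self_add))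
    have h2 : subst e α q + subst e α r =
        omega0 ^ subst e α a * (c + d) + subst e α s := by
      rw [hqHD, hrHD, add_assoc, habs2, ← add_assoc, ← mul_add]
    rw [h1, h2, subst_HD' e hα hcd0 hcdw hsw]
  · -- r absorbed into tail of q
    have hrw : r < omega0 ^ a := (lt_opow_iff_log_lt one_lt_omega0 hr0).2 hab
    have htr : t + r < omega0 ^ a := principal_add_omega0_opow a htw hrw
    have h1 : q + r = omega0 ^ a * c + (t + r) := by rw [← hqd, add_assoc]
    have h2 := IHq t htq hte r hr
    rw [h1, subst_HD' e hα hc0 hcw htr, h2, hqHD, add_assoc]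

lemma opow_mul_add_mul_nat {a c t : Ordinal} (hc0 : c ≠ 0) (ht : t < omega0 ^ a) :
    ∀ n : ℕ, n ≠ 0 → (omega0 ^ a * c + t) * n = omega0 ^ a * (c * n) + t := by
  intro n
  induction n with
  | zero => intro h; exact absurd rfl h
  | succ n ih =>
    intro _
    by_cases hn : n = 0
    · subst hn; simp
    · have h1 := ih hn
      have hcast : ((n + 1 : ℕ) : Ordinal) = (n : Ordinal) + 1 := Nat.cast_succ n
      have habs : t + (omega0 ^ a * c + t) = omega0 ^ a * c + t :=
        add_absorp ht (le_trans (Ordinal.le_mul_left _ (pos_iff_ne_zero.2 hc0))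
          (le_self_add))
      calc (omega0 ^ a * c + t) * ((n + 1 : ℕ) : Ordinal)
          = (omega0 ^ a * c + t) * ((n : Ordinal) + 1) := by rw [hcast]
        _ = (omega0 ^ a * c + t) * (n : Ordinal) + (omega0 ^ a * c + t) := by
            rw [mul_add_one]
        _ = omega0 ^ a * (c * n) + t + (omega0 ^ a * c + t) := by rw [h1]
        _ = omega0 ^ a * (c * n) + (omega0 ^ a * c + t) := by rw [add_assoc, habs]
        _ = omega0 ^ a * (c * n) + omega0 ^ a * c + t := by rw [add_assoc]
        _ = omega0 ^ a * (c * n + c) + t := by rw [mul_add]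
        _ = omega0 ^ a * (c * ((n : Ordinal) + 1)) + t := by rw [mul_add_one]
        _ = omega0 ^ a * (c * ((n + 1 : ℕ) : Ordinal)) + t := by rw [hcast]

lemma mul_omega0_opow' {q a b : Ordinal} (h1 : omega0 ^ a ≤ q) (h2 : q < omega0 ^ (a + 1))
    (hb : 0 < b) : q * omega0 ^ b = omega0 ^ (a + b) := by
  have hqw : q * omega0 = omega0 ^ (a + 1) := by
    apply le_antisymm
    · rw [add_one_eq_succ, opow_succ] at h2
      rcases (lt_mul_iff_of_isSuccLimit isSuccLimit_omega0).1 h2 with ⟨m, hm, hqm⟩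
      have hm0 : 0 < m := by
        rcases eq_zero_or_pos m with rfl | h
        · rw [mul_zero] at hqm
          exact absurd hqm (not_lt_of_ge zero_le).elim
        · exact h
      calc q * omega0 ≤ omega0 ^ a * m * omega0 := mul_le_mul_left hqm.le _
        _ = omega0 ^ a * (m * omega0) := by rw [mul_assoc]
        _ = omega0 ^ a * omega0 := by rw [mul_omega0 hm0 hm]
        _ = omega0 ^ (a + 1) := by rw [add_one_eq_succ, opow_succ]
    · rw [add_one_eq_succ, opow_succ]
      exact mul_le_mul_left h1 _
  have hb' : 1 + (b - 1) = b := Ordinal.add_sub_cancel_of_le (Order.one_le_iff_pos.2 hb)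
  calc q * omega0 ^ b = q * omega0 ^ (1 + (b - 1)) := by rw [hb']
    _ = q * (omega0 ^ (1:Ordinal) * omega0 ^ (b - 1)) := by rw [opow_add]
    _ = q * omega0 * omega0 ^ (b - 1) := by rw [opow_one, mul_assoc]
    _ = omega0 ^ (a + 1) * omega0 ^ (b - 1) := by rw [hqw]
    _ = omega0 ^ (a + 1 + (b - 1)) := (opow_add _ _ _).symm
    _ = omega0 ^ (a + b) := by rw [add_assoc, hb']

lemma subst_mul (e α : Ordinal) (he : IsEps e) (hα : IsEps α) (hle : e ≤ α) :
    ∀ r, r < nextEps e → ∀ q, q < nextEps e →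
      subst e α (q * r) = subst e α q * subst e α r := by
  intro r
  induction r using Ordinal.induction with
  | h r IHr =>
  intro hr q hq
  by_cases hq0 : q = 0
  · rw [hq0, zero_mul, subst_zero, zero_mul]
  by_cases hr0 : r = 0
  · rw [hr0, mul_zero, subst_zero, mul_zero]
  set a := log omega0 q with ha
  set c := q / omega0 ^ a with hcdef
  set t := q % omega0 ^ a with htdef
  have hqd : omega0 ^ a * c + t = q := div_add_mod q (omega0 ^ a)
  have hc0 : c ≠ 0 :=
    ((Ordinal.div_pos (opow_ne_zero _ omega0_ne_zero)).2 (opow_log_le_self _ hq0)).ne'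
  have hcw : c < omega0 := div_opow_log_lt q one_lt_omega0
  have htw : t < omega0 ^ a := mod_lt q (opow_ne_zero _ omega0_ne_zero)
  have hqHD : subst e α q = omega0 ^ subst e α a * c + subst e α t := by
    conv_lhs => rw [← hqd]
    exact subst_HD' e hα hc0 hcw htw
  set b := log omega0 r with hb
  set d := r / omega0 ^ b with hddef
  set s := r % omega0 ^ b with hsdef
  have hrd : omega0 ^ b * d + s = r := div_add_mod r (omega0 ^ b)
  have hd0 : d ≠ 0 :=
    ((Ordinal.div_pos (opow_ne_zero _ omega0_ne_zero)).2 (opow_log_le_self _ hr0)).ne'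
  have hdw : d < omega0 := div_opow_log_lt r one_lt_omega0
  have hsw : s < omega0 ^ b := mod_lt r (opow_ne_zero _ omega0_ne_zero)
  have hsr : s < r := lt_of_lt_of_le hsw (opow_log_le_self _ hr0)
  have hrHD : subst e α r = omega0 ^ subst e α b * d + subst e α s := by
    conv_lhs => rw [← hrd]
    exact subst_HD' e hα hd0 hdw hsw
  have hae : a < nextEps e := lt_of_le_of_lt (log_le_self _ _) hq
  have hbe : b < nextEps e := lt_of_le_of_lt (log_le_self _ _) hr
  obtain ⟨-, -, -, -, Ta, -, -⟩ := master e α he hα hle a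
  obtain ⟨-, Eb, -, -, -, -, -⟩ := master e α he hα hle b
  by_cases hb0 : b = 0
  · -- r is finite
    have hs0 : s = 0 := by
      have := hsw
      rw [hb0, opow_zero] at this
      exact Ordinal.lt_one_iff_zero.1 this
    have hrd' : r = d := by rw [← hrd, hb0, hs0, opow_zero, one_mul, add_zero]
    rcases lt_omega0.1 hdw with ⟨n, hn⟩
    have hn0 : n ≠ 0 := by
      rintro rfl
      exact hd0 (by simpa using hn)
    have hde : d < e := lt_of_lt_of_le hdw (isEps_omega0_le he)
    have hgd : subst e α d = d := subst_lt_of_lt_eps he hα hle hde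
    have hcn0 : c * d ≠ 0 := _root_.mul_ne_zero hc0 hd0
    have hcnw : c * d < omega0 := principal_mul_omega0 hcw hdw
    calc subst e α (q * r) = subst e α ((omega0 ^ a * c + t) * d) := by rw [hqd, hrd']
      _ = subst e α (omega0 ^ a * (c * d) + t) := by
          rw [hn, opow_mul_add_mul_nat hc0 htw n hn0]
      _ = omega0 ^ subst e α a * (c * d) + subst e α t := subst_HD' e hα hcn0 hcnw htw
      _ = (omega0 ^ subst e α a * c + subst e α t) * d := by
          rw [hn, opow_mul_add_mul_nat ?_ (Ta hae t htw) n hn0]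
          exact hc0
      _ = subst e α q * subst e α r := by rw [← hqHD, hrd', hgd]
  · -- b > 0
    have hbpos : 0 < b := pos_iff_ne_zero.2 hb0
    have hq0' : 0 < q := pos_iff_ne_zero.2 hq0
    have hqlo : omega0 ^ a ≤ q := opow_log_le_self _ hq0
    have hqhi : q < omega0 ^ (a + 1) := by
      rw [add_one_eq_succ]
      exact lt_opow_succ_log_self one_lt_omega0 q
    have h1 : q * omega0 ^ b = omega0 ^ (a + b) := mul_omega0_opow' hqlo hqhi hbpos
    have hqs : q * s < omega0 ^ (a + b) := by
      rw [← h1]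
      exact mul_lt_mul_of_pos_left hsw hq0'
    have hqr : q * r = omega0 ^ (a + b) * d + q * s := by
      conv_lhs => rw [← hrd]
      rw [mul_add, ← mul_assoc, h1]
    have hIH : subst e α (q * s) = subst e α q * subst e α s :=
      IHr s hsr (hsr.trans hr) q hq
    have hab : subst e α (a + b) = subst e α a + subst e α b :=
      subst_add e α he hα hle a hae b hbe
    have hgqlo : omega0 ^ subst e α a ≤ subst e α q := by
      rw [hqHD]
      exact le_trans (Ordinal.le_mul_left _ (pos_iff_ne_zero.2 hc0)) (le_self_add)
    have hgqhi : subst e α q < omega0 ^ (subst e α a + 1) := by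
      rw [hqHD]
      calc omega0 ^ subst e α a * c + subst e α t
          < omega0 ^ subst e α a * c + omega0 ^ subst e α a := add_lt_add_right (Ta hae t htw) _
        _ = omega0 ^ subst e α a * (c + 1) := by rw [mul_add_one]
        _ ≤ omega0 ^ subst e α a * omega0 := mul_le_mul_right (succ_le_of_lt' hcw) _
        _ = omega0 ^ (subst e α a + 1) := by rw [add_one_eq_succ, opow_succ]
    have hgb : 0 < subst e α b := lt_of_lt_of_le hbpos (Eb hbe)
    have h2 : subst e α q * omega0 ^ subst e α b =
        omega0 ^ (subst e α a + subst e α b) := mul_omega0_opow' hgqlo hgqhi hgb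
    calc subst e α (q * r) = subst e α (omega0 ^ (a + b) * d + q * s) := by rw [hqr]
      _ = omega0 ^ subst e α (a + b) * d + subst e α (q * s) := subst_HD' e hα hd0 hdw hqs
      _ = omega0 ^ (subst e α a + subst e α b) * d + subst e α q * subst e α s := by
          rw [hab, hIH]
      _ = subst e α q * (omega0 ^ subst e α b * d) + subst e α q * subst e α s := by
          rw [← h2, mul_assoc]
      _ = subst e α q * (omega0 ^ subst e α b * d + subst e α s) := by rw [← mul_add]
      _ = subst e α q * subst e α r := by rw [← hrHD]

lemma subst_inv (e α : Ordinal) (he : IsEps e) (hα : IsEps α) (hle : e ≤ α) :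
    ∀ y, y < nextEps e → subst α e (subst e α y) = y := by
  intro y
  induction y using Ordinal.induction with
  | h y IH =>
  intro h1
  by_cases hy0 : y = 0
  · rw [hy0, subst_zero, subst_zero]
  by_cases heps : IsEps y
  · by_cases hye : y = e
    · rw [hye, subst_eps e α he, if_pos rfl, subst_eps α e hα, if_pos rfl]
    · have hylt : y < e := lt_of_le_of_ne (eps_le_of_lt_nextEps heps h1) hye
      rw [subst_eps e α heps, if_neg hye, subst_eps α e heps,
        if_neg (ne_of_lt (lt_of_lt_of_le hylt hle))]
  · set a := log omega0 y with ha
    set c := y / omega0 ^ a with hcdef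
    set t := y % omega0 ^ a with htdef
    have hyd : omega0 ^ a * c + t = y := div_add_mod y (omega0 ^ a)
    have hc0 : c ≠ 0 :=
      ((Ordinal.div_pos (opow_ne_zero _ omega0_ne_zero)).2 (opow_log_le_self _ hy0)).ne'
    have hcw : c < omega0 := div_opow_log_lt y one_lt_omega0
    have htw : t < omega0 ^ a := mod_lt y (opow_ne_zero _ omega0_ne_zero)
    have hay : a < y := log_lt_noneps heps hy0
    have hty : t < y := lt_of_lt_of_le htw (opow_log_le_self _ hy0)
    have hHD : subst e α y = omega0 ^ subst e α a * c + subst e α t := by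
      conv_lhs => rw [← hyd]
      exact subst_HD' e hα hc0 hcw htw
    obtain ⟨-, -, -, -, Ta, -, -⟩ := master e α he hα hle a
    have h3 : subst e α t < omega0 ^ subst e α a := Ta (hay.trans h1) t htw
    rw [hHD, subst_HD' α he hc0 hcw h3, IH a hay (hay.trans h1), IH t hty (hty.trans h1), hyd]

lemma inEp_mod {z r : Ordinal} (hr : ¬ IsEps r) (hr0 : r ≠ 0)
    (hz : InEp z (r % omega0 ^ log omega0 r)) : InEp z r := by
  generalize htdef : r % omega0 ^ log omega0 r = t at hz
  have hcnf : CNF omega0 r = (log omega0 r, r / omega0 ^ log omega0 r)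
      :: CNF omega0 t := by
    rw [Ordinal.CNF.ne_zero hr0, htdef]
  by_cases ht : IsEps t
  · have hzt : z = t := (inEp_eps_iff ht).1 hz
    refine InEp.exp r t 1 z hr ?_ hz
    rw [hcnf, CNF_eps ht]
    exact List.mem_cons_of_mem _ (List.mem_singleton.2 rfl)
  · cases hz with
    | self x h => exact absurd h ht
    | exp x ee cc yy h hm hy =>
        refine InEp.exp r ee cc z hr ?_ hy
        rw [hcnf]
        exact List.mem_cons_of_mem _ hm

lemma subst_surj (e α : Ordinal) (he : IsEps e) (hα : IsEps α) (hle : e ≤ α) :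
    ∀ r, r < nextEps α → (Ep r ∩ Set.Iio α ⊆ Set.Iio e) →
      ∃ y, y < nextEps e ∧ subst e α y = r := by
  intro r
  induction r using Ordinal.induction with
  | h r IH =>
  intro hr hEp
  by_cases hr0 : r = 0
  · exact ⟨0, lt_trans (isEps_pos he) (lt_nextEps e), by rw [hr0, subst_zero]⟩
  by_cases heps : IsEps r
  · rcases eq_or_lt_of_le (eps_le_of_lt_nextEps heps hr) with hra | hra
    · exact ⟨e, lt_nextEps e, by rw [subst_eps e α he, if_pos rfl, hra]⟩
    · have hre : r < e := hEp ⟨InEp.self r heps, hra⟩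
      exact ⟨r, lt_trans hre (lt_nextEps e),
        subst_lt_of_lt_eps he hα hle hre⟩
  · set a := log omega0 r with ha
    set c := r / omega0 ^ a with hcdef
    set t := r % omega0 ^ a with htdef
    have hrd : omega0 ^ a * c + t = r := div_add_mod r (omega0 ^ a)
    have hc0 : c ≠ 0 :=
      ((Ordinal.div_pos (opow_ne_zero _ omega0_ne_zero)).2 (opow_log_le_self _ hr0)).ne'
    have hcw : c < omega0 := div_opow_log_lt r one_lt_omega0
    have htw : t < omega0 ^ a := mod_lt r (opow_ne_zero _ omega0_ne_zero)
    have hartmp : a < r := log_lt_noneps heps hr0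
    have htr : t < r := lt_of_lt_of_le htw (opow_log_le_self _ hr0)
    have hEa : Ep a ∩ Set.Iio α ⊆ Set.Iio e := fun z hz =>
      hEp ⟨inEp_head heps hr0 ha.symm hz.1, hz.2⟩
    have hEt : Ep t ∩ Set.Iio α ⊆ Set.Iio e := fun z hz =>
      hEp ⟨inEp_mod heps hr0 hz.1, hz.2⟩
    obtain ⟨a', ha'e, hga⟩ := IH a hartmp (hartmp.trans hr) hEa
    obtain ⟨t', ht'e, hgt⟩ := IH t htr (htr.trans hr) hEt
    have ht' : t' < omega0 ^ a' := by
      by_contra hcon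
      push_neg at hcon
      have h5 := subst_le e α he hα hle hcon ht'e
      rw [subst_opow e hα a', hga, hgt] at h5
      exact absurd (lt_of_le_of_lt h5 htw) (lt_irrefl _)
    refine ⟨omega0 ^ a' * c + t', ?_, ?_⟩
    · have hEps := isEps_nextEps e
      have hce : c < nextEps e :=
        lt_of_lt_of_le hcw ((isEps_omega0_le he).trans (lt_nextEps e).le)
      exact add_lt_eps hEps (mul_lt_eps hEps (opow_lt_eps hEps ha'e) hce) ht'e
    · rw [subst_HD' e hα hc0 hcw ht', hga, hgt, hrd]

end SubstAux
end SubstAux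

open SubstAux SubstAux.SubstAux in
/-- For epsilon numbers e ≤ α, the map q ↦ q[e := α] is an order isomorphism
from [e, e⁺) onto [α, α⁺) ∩ M(α, e), commuting with +, ·, and ω^·,
with inverse q ↦ q[α := e]. -/
theorem subst_orderIso (e α : Ordinal.{0}) (he : IsEps e) (hα : IsEps α) (hle : e ≤ α) :
    (∀ q ∈ Set.Ico e (nextEps e),
        subst e α q ∈ Set.Ico α (nextEps α) ∩ MSet α e) ∧
    (∀ q ∈ Set.Ico e (nextEps e), ∀ r ∈ Set.Ico e (nextEps e),
        (q < r ↔ subst e α q < subst e α r) ∧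
        subst e α (q + r) = subst e α q + subst e α r ∧
        subst e α (q * r) = subst e α q * subst e α r) ∧
    (∀ q ∈ Set.Ico e (nextEps e),
        subst e α (omega0 ^ q) = omega0 ^ subst e α q) ∧
    (∀ q ∈ Set.Ico e (nextEps e), subst α e (subst e α q) = q) ∧
    (∀ r ∈ Set.Ico α (nextEps α) ∩ MSet α e,
        subst e α (subst α e r) = r ∧ subst α e r ∈ Set.Ico e (nextEps e)) := by
  refine ⟨?_, ?_, ?_, ?_, ?_⟩
  · rintro q ⟨hq1, hq2⟩
    obtain ⟨-, -, B, -, -, C, D⟩ := master e α he hα hle q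
    exact ⟨⟨B hq1 hq2, C hq2⟩, C hq2, D hq2⟩
  · rintro q ⟨hq1, hq2⟩ r ⟨hr1, hr2⟩
    refine ⟨⟨fun hqr => (master e α he hα hle r).2.2.2.1 hr2 q hqr, ?_⟩,
      subst_add e α he hα hle q hq2 r hr2, subst_mul e α he hα hle r hr2 q hq2⟩
    intro hlt
    by_contra hnot
    push_neg at hnot
    rcases lt_or_eq_of_le hnot with h' | h'
    · exact absurd hlt (not_lt.2 ((master e α he hα hle q).2.2.2.1 hq2 r h').le)
    · rw [h'] at hlt
      exact lt_irrefl _ hlt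
  · rintro q -
    exact subst_opow e hα q
  · rintro q ⟨-, hq2⟩
    exact subst_inv e α he hα hle q hq2
  · rintro r ⟨⟨hr1, hr2⟩, -, hM2⟩
    obtain ⟨y, hye, hgy⟩ := subst_surj e α he hα hle r hr2 hM2
    have hinv : subst α e r = y := by rw [← hgy, subst_inv e α he hα hle y hye]
    have hey : e ≤ y := by
      by_contra hc
      push_neg at hc
      have h5 : subst e α y = y := subst_lt_of_lt_eps he hα hle hc
      have hyr : y = r := h5.symm.trans hgy
      exact absurd hr1 (not_le.2 (lt_of_lt_of_le (hyr ▸ hc) hle))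
    refine ⟨by rw [hinv, hgy], ?_⟩
    rw [hinv]
    exact ⟨hey, hye⟩
end
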